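/- Let r = (r₁,r₂) ∈ ℚ²∖ℤ² and γ = [[a,b],[c,d]] ∈ SL₂(ℤ). Then for all τ ∈ ℍ, f_r(γτ) = f_{ᵗγ r}(τ), where ᵗγ r = (a r₁ + c r₂, b r₁ + d r₂); that is, the Fricke function satisfies f_r ∘ γ = f_{(a r₁ + c r₂,\; b r₁ + d r₂)} as functions on ℍ. -/

import Mathlib

open Complex UpperHalfPlane Matrix MatrixGroups CongruenceSubgroup
open scoped UpperHalfPlane Manifold Real

noncomputable section

/-- `N·τ` as a point of the upper half-plane (junk value `τ` if `N = 0`). -/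
def hsmul (N : ℕ) (τ : UpperHalfPlane) : UpperHalfPlane :=
  if hN : 0 < N then
    ⟨(N : ℂ) * τ, by
      have h0 : (0 : ℝ) < (N : ℝ) := by exact_mod_cast hN
      simpa [Complex.mul_im] using mul_pos h0 τ.2⟩
  else τ

/-- The Siegel function `g_r(τ)` given by its infinite product expansion. -/
def siegel (r : ℚ × ℚ) (τ : ℍ) : ℂ :=
  -Complex.exp ((Real.pi : ℂ) * Complex.I * (((r.1 : ℂ) ^ 2 - (r.1 : ℂ) + 1 / 6) * τ)) *
    Complex.exp ((Real.pi : ℂ) * Complex.I * (r.2 : ℂ) * ((r.1 : ℂ) - 1)) *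
    (1 - Complex.exp (2 * (Real.pi : ℂ) * Complex.I * ((r.1 : ℂ) * τ + (r.2 : ℂ)))) *
    ∏' n : ℕ,
      ((1 - Complex.exp (2 * (Real.pi : ℂ) * Complex.I *
          (((n : ℂ) + 1 + (r.1 : ℂ)) * τ + (r.2 : ℂ)))) *
       (1 - Complex.exp (2 * (Real.pi : ℂ) * Complex.I *
          (((n : ℂ) + 1 - (r.1 : ℂ)) * τ - (r.2 : ℂ)))))

/-- The lattice point `ω = m·τ + n` attached to a pair `(m,n) ∈ ℤ²`. -/
def lat (τ : ℍ) (p : ℤ × ℤ) : ℂ := (p.1 : ℂ) * τ + (p.2 : ℂ)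

/-- `g₂(τ) = 60 ∑_{ω ∈ L_τ ∖ {0}} ω⁻⁴`. -/
def g2C (τ : ℍ) : ℂ := 60 * ∑' p : {p : ℤ × ℤ // p ≠ 0}, ((lat τ p.1) ^ 4)⁻¹

/-- `g₃(τ) = 140 ∑_{ω ∈ L_τ ∖ {0}} ω⁻⁶`. -/
def g3C (τ : ℍ) : ℂ := 140 * ∑' p : {p : ℤ × ℤ // p ≠ 0}, ((lat τ p.1) ^ 6)⁻¹

/-- The discriminant `Δ(τ) = g₂(τ)³ - 27 g₃(τ)²`. -/
def discC (τ : ℍ) : ℂ := g2C τ ^ 3 - 27 * g3C τ ^ 2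

/-- The Weierstrass `℘`-function relative to the lattice `L_τ = ℤτ + ℤ`. -/
def wpC (z : ℂ) (τ : ℍ) : ℂ :=
  (z ^ 2)⁻¹ + ∑' p : {p : ℤ × ℤ // p ≠ 0}, (((z - lat τ p.1) ^ 2)⁻¹ - ((lat τ p.1) ^ 2)⁻¹)

/-- The Fricke function `f_r(τ)`. -/
def fricke (r : ℚ × ℚ) (τ : ℍ) : ℂ :=
  -(2 ^ 7 * 3 ^ 5) * (g2C τ * g3C τ / discC τ) * wpC ((r.1 : ℂ) * τ + (r.2 : ℂ)) τ

/-- The elliptic modular `j`-invariant. -/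
def jinv (τ : ℍ) : ℂ := 1728 * g2C τ ^ 3 / discC τ

/-- The Dedekind eta function. -/
def etaC (τ : ℍ) : ℂ :=
  (Real.sqrt (2 * Real.pi) : ℂ) * Complex.exp (2 * (Real.pi : ℂ) * Complex.I / 16) *
    Complex.exp (2 * (Real.pi : ℂ) * Complex.I * τ / 24) *
    ∏' n : ℕ, (1 - Complex.exp (2 * (Real.pi : ℂ) * Complex.I * ((n : ℂ) + 1) * τ))

/-- `r ∈ ℚ² ∖ ℤ²`. -/
def NonIntegral (r : ℚ × ℚ) : Prop := ¬ ∃ a b : ℤ, r = ((a : ℚ), (b : ℚ))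

/-- `r ∈ (1/N)ℤ²`. -/
def InDen (N : ℕ) (r : ℚ × ℚ) : Prop := ∃ a b : ℤ, r = ((a : ℚ) / N, (b : ℚ) / N)

/-- Membership in `Γ^1(N)`: `a ≡ d ≡ 1` and `b ≡ 0 (mod N)`. -/
def GammaUpper (N : ℕ) (γ : SL(2, ℤ)) : Prop :=
  ((γ 0 0 : ℤ) : ZMod N) = 1 ∧ ((γ 1 1 : ℤ) : ZMod N) = 1 ∧ ((γ 0 1 : ℤ) : ZMod N) = 0

/-- The transpose action `ᵗγ r = (a r₁ + c r₂, b r₁ + d r₂)` of `γ = [[a,b],[c,d]]`. -/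
def tAct (γ : SL(2, ℤ)) (r : ℚ × ℚ) : ℚ × ℚ :=
  ((γ 0 0 : ℚ) * r.1 + (γ 1 0 : ℚ) * r.2, (γ 0 1 : ℚ) * r.1 + (γ 1 1 : ℚ) * r.2)

/-- The power `q^{n/d} = e^{2πi(n/d)τ}`. -/
def qpow (d : ℕ) (n : ℤ) (τ : ℍ) : ℂ :=
  Complex.exp (2 * (Real.pi : ℂ) * Complex.I * ((n : ℂ) / (d : ℂ)) * τ)

/-- `h` is a weakly holomorphic modular function for `Γ₁(N)` with rational
Fourier coefficients: holomorphic on `ℍ`, `Γ₁(N)`-invariant, with a convergent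
`q`-expansion at `i∞` having rational coefficients, and meromorphic at every cusp. -/
def IsWeaklyHolo1 (N : ℕ) (h : ℍ → ℂ) : Prop :=
  MDifferentiable 𝓘(ℂ) 𝓘(ℂ) h ∧
  (∀ γ ∈ Gamma1 N, ∀ τ : ℍ, h (γ • τ) = h τ) ∧
  (∃ n₀ : ℤ, ∃ c : ℕ → ℚ,
    ∀ τ : ℍ, HasSum (fun n : ℕ => (c n : ℂ) * qpow 1 (n₀ + n) τ) (h τ)) ∧
  (∀ γ : SL(2, ℤ), ∃ n₀ : ℤ, ∃ c : ℕ → ℂ,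
    ∀ τ : ℍ, HasSum (fun n : ℕ => c n * qpow N (n₀ + n) τ) (h (γ • τ)))

/-- `h` is a weakly holomorphic modular function for `Γ^1(N)` with rational
Fourier coefficients (the expansion at `i∞` being in powers of `q^{1/N}`). -/
def IsWeaklyHoloUp (N : ℕ) (h : ℍ → ℂ) : Prop :=
  MDifferentiable 𝓘(ℂ) 𝓘(ℂ) h ∧
  (∀ γ : SL(2, ℤ), GammaUpper N γ → ∀ τ : ℍ, h (γ • τ) = h τ) ∧
  (∃ n₀ : ℤ, ∃ c : ℕ → ℚ,
    ∀ τ : ℍ, HasSum (fun n : ℕ => (c n : ℂ) * qpow N (n₀ + n) τ) (h τ)) ∧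
  (∀ γ : SL(2, ℤ), ∃ n₀ : ℤ, ∃ c : ℕ → ℂ,
    ∀ τ : ℍ, HasSum (fun n : ℕ => c n * qpow N (n₀ + n) τ) (h (γ • τ)))

/-- The Weierstrass-unit generator
`f^1_{m,N} = (f_{(1/N,0)} - f_{(1/m,0)})/(f_{(2/m,0)} - f_{(1/m,0)})`. -/
def fUnit (m N : ℕ) (τ : ℍ) : ℂ :=
  (fricke ((1 : ℚ) / N, 0) τ - fricke ((1 : ℚ) / m, 0) τ) /
    (fricke ((2 : ℚ) / m, 0) τ - fricke ((1 : ℚ) / m, 0) τ)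

namespace StmtAux

/-- Right multiplication of a row vector by `γ`. -/
def Mγ (γ : SL(2, ℤ)) (p : ℤ × ℤ) : ℤ × ℤ :=
  (γ 0 0 * p.1 + γ 1 0 * p.2, γ 0 1 * p.1 + γ 1 1 * p.2)

/-- Right multiplication of a row vector by `γ⁻¹`. -/
def Mγ' (γ : SL(2, ℤ)) (p : ℤ × ℤ) : ℤ × ℤ :=
  (γ 1 1 * p.1 - γ 1 0 * p.2, -(γ 0 1) * p.1 + γ 0 0 * p.2)

lemma det_entries (γ : SL(2, ℤ)) : γ 0 0 * γ 1 1 - γ 0 1 * γ 1 0 = 1 := by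
  have h := γ.2
  rw [Matrix.det_fin_two] at h
  exact h

lemma M'M (γ : SL(2, ℤ)) (p : ℤ × ℤ) : Mγ' γ (Mγ γ p) = p := by
  have h := det_entries γ
  cases p with
  | mk p1 p2 =>
    simp only [Mγ, Mγ', Prod.mk.injEq]
    constructor
    · linear_combination p1 * h
    · linear_combination p2 * h

lemma MM' (γ : SL(2, ℤ)) (p : ℤ × ℤ) : Mγ γ (Mγ' γ p) = p := by
  have h := det_entries γ
  cases p with
  | mk p1 p2 =>
    simp only [Mγ, Mγ', Prod.mk.injEq]
    constructor
    · linear_combination p1 * h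
    · linear_combination p2 * h

lemma Mγ_ne_zero (γ : SL(2, ℤ)) {p : ℤ × ℤ} (hp : p ≠ 0) : Mγ γ p ≠ 0 := by
  intro h
  apply hp
  have h2 := M'M γ p
  rw [h] at h2
  simpa [Mγ', Prod.ext_iff] using h2.symm

lemma Mγ'_ne_zero (γ : SL(2, ℤ)) {p : ℤ × ℤ} (hp : p ≠ 0) : Mγ' γ p ≠ 0 := by
  intro h
  apply hp
  have h2 := MM' γ p
  rw [h] at h2
  simpa [Mγ, Prod.ext_iff] using h2.symm

/-- The bijection `p ↦ pγ` on nonzero lattice points. -/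
def Eγ (γ : SL(2, ℤ)) : {p : ℤ × ℤ // p ≠ 0} ≃ {p : ℤ × ℤ // p ≠ 0} where
  toFun p := ⟨Mγ γ p.1, Mγ_ne_zero γ p.2⟩
  invFun p := ⟨Mγ' γ p.1, Mγ'_ne_zero γ p.2⟩
  left_inv p := Subtype.ext (M'M γ p.1)
  right_inv p := Subtype.ext (MM' γ p.1)

lemma tsum_reindex (γ : SL(2, ℤ)) (f : ℤ × ℤ → ℂ) :
    ∑' p : {p : ℤ × ℤ // p ≠ 0}, f (Mγ γ p.1) = ∑' p : {p : ℤ × ℤ // p ≠ 0}, f p.1 := by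
  rw [← Equiv.tsum_eq (Eγ γ) (fun p : {p : ℤ × ℤ // p ≠ 0} => f p.1)]
  exact tsum_congr fun p => rfl

lemma denom_ne_zero' (γ : SL(2, ℤ)) (τ : ℍ) :
    ((γ 1 0 : ℤ) : ℂ) * (τ : ℂ) + ((γ 1 1 : ℤ) : ℂ) ≠ 0 := by
  intro h
  have him := congrArg Complex.im h
  simp only [Complex.add_im, Complex.mul_im, Complex.intCast_im, Complex.intCast_re,
    Complex.zero_im, zero_mul, add_zero, mul_zero, zero_add] at him
  have hτ := τ.2
  have hc : (γ 1 0 : ℤ) = 0 := by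
    by_contra hc
    have h1 : ((γ 1 0 : ℤ) : ℝ) ≠ 0 := Int.cast_ne_zero.mpr hc
    exact mul_ne_zero h1 (ne_of_gt hτ) him
  rw [hc] at h
  simp only [Int.cast_zero, zero_mul, zero_add] at h
  have hd : (γ 1 1 : ℤ) = 0 := by exact_mod_cast h
  have hdet := det_entries γ
  rw [hc, hd] at hdet
  simp at hdet

lemma smul_coe (γ : SL(2, ℤ)) (τ : ℍ) :
    ((γ • τ : ℍ) : ℂ) =
      (((γ 0 0 : ℤ) : ℂ) * τ + ((γ 0 1 : ℤ) : ℂ)) /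
        (((γ 1 0 : ℤ) : ℂ) * τ + ((γ 1 1 : ℤ) : ℂ)) := by
  rw [UpperHalfPlane.specialLinearGroup_apply]
  simp [UpperHalfPlane.coe_mk]

lemma lat_smul (γ : SL(2, ℤ)) (τ : ℍ) (p : ℤ × ℤ) :
    lat (γ • τ) p = lat τ (Mγ γ p) / (((γ 1 0 : ℤ) : ℂ) * τ + ((γ 1 1 : ℤ) : ℂ)) := by
  have hj := denom_ne_zero' γ τ
  rw [lat, lat, smul_coe, Mγ]
  push_cast
  rw [eq_div_iff hj]
  rw [add_mul, mul_assoc, div_mul_cancel₀ _ hj]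
  ring

lemma g2C_smul (γ : SL(2, ℤ)) (τ : ℍ) :
    g2C (γ • τ) = (((γ 1 0 : ℤ) : ℂ) * τ + ((γ 1 1 : ℤ) : ℂ)) ^ 4 * g2C τ := by
  rw [g2C, g2C]
  have h : ∀ p : {p : ℤ × ℤ // p ≠ 0},
      ((lat (γ • τ) p.1) ^ 4)⁻¹ =
        (((γ 1 0 : ℤ) : ℂ) * τ + ((γ 1 1 : ℤ) : ℂ)) ^ 4 * ((lat τ (Mγ γ p.1)) ^ 4)⁻¹ := by
    intro p
    rw [lat_smul γ τ p.1, div_pow, inv_div, div_eq_mul_inv]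
  rw [tsum_congr h, tsum_mul_left, tsum_reindex γ (fun q => ((lat τ q) ^ 4)⁻¹)]
  ring

lemma g3C_smul (γ : SL(2, ℤ)) (τ : ℍ) :
    g3C (γ • τ) = (((γ 1 0 : ℤ) : ℂ) * τ + ((γ 1 1 : ℤ) : ℂ)) ^ 6 * g3C τ := by
  rw [g3C, g3C]
  have h : ∀ p : {p : ℤ × ℤ // p ≠ 0},
      ((lat (γ • τ) p.1) ^ 6)⁻¹ =
        (((γ 1 0 : ℤ) : ℂ) * τ + ((γ 1 1 : ℤ) : ℂ)) ^ 6 * ((lat τ (Mγ γ p.1)) ^ 6)⁻¹ := by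
    intro p
    rw [lat_smul γ τ p.1, div_pow, inv_div, div_eq_mul_inv]
  rw [tsum_congr h, tsum_mul_left, tsum_reindex γ (fun q => ((lat τ q) ^ 6)⁻¹)]
  ring

lemma wpC_smul (γ : SL(2, ℤ)) (τ : ℍ) (z : ℂ) :
    wpC (z / (((γ 1 0 : ℤ) : ℂ) * τ + ((γ 1 1 : ℤ) : ℂ))) (γ • τ)
      = (((γ 1 0 : ℤ) : ℂ) * τ + ((γ 1 1 : ℤ) : ℂ)) ^ 2 * wpC z τ := by
  set j : ℂ := ((γ 1 0 : ℤ) : ℂ) * τ + ((γ 1 1 : ℤ) : ℂ) with hjdef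
  rw [wpC, wpC]
  have hterm : ∀ p : {p : ℤ × ℤ // p ≠ 0},
      (((z / j - lat (γ • τ) p.1) ^ 2)⁻¹ - ((lat (γ • τ) p.1) ^ 2)⁻¹)
        = j ^ 2 * (((z - lat τ (Mγ γ p.1)) ^ 2)⁻¹ - ((lat τ (Mγ γ p.1)) ^ 2)⁻¹) := by
    intro p
    rw [lat_smul γ τ p.1, ← hjdef, div_sub_div_same, div_pow, inv_div, div_pow, inv_div,
      div_eq_mul_inv, div_eq_mul_inv]
    ring
  rw [tsum_congr hterm, tsum_mul_left,
    tsum_reindex γ (fun q => (((z - lat τ q) ^ 2)⁻¹ - ((lat τ q) ^ 2)⁻¹)),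
    div_pow, inv_div, div_eq_mul_inv]
  ring

end StmtAux

open StmtAux in
/-- the Fricke function satisfies `f_r ∘ γ = f_{ᵗγ r}`. -/
theorem statement3 (r : ℚ × ℚ) (hr : NonIntegral r) (γ : SL(2, ℤ)) :
    ∀ τ : ℍ, fricke r (γ • τ) = fricke (tAct γ r) τ := by
  intro τ
  have hj : ((γ 1 0 : ℤ) : ℂ) * (τ : ℂ) + ((γ 1 1 : ℤ) : ℂ) ≠ 0 := denom_ne_zero' γ τ
  have hz : (r.1 : ℂ) * ((γ • τ : ℍ) : ℂ) + (r.2 : ℂ)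
      = (((tAct γ r).1 : ℂ) * τ + ((tAct γ r).2 : ℂ)) /
          (((γ 1 0 : ℤ) : ℂ) * τ + ((γ 1 1 : ℤ) : ℂ)) := by
    rw [smul_coe, tAct]
    push_cast
    rw [eq_div_iff hj]
    rw [add_mul, mul_assoc, div_mul_cancel₀ _ hj]
    ring
  rw [fricke, fricke, hz, wpC_smul γ τ, discC, discC, g2C_smul, g3C_smul]
  set j : ℂ := ((γ 1 0 : ℤ) : ℂ) * τ + ((γ 1 1 : ℤ) : ℂ) with hjdef
  clear_value j
  by_cases hΔ : g2C τ ^ 3 - 27 * g3C τ ^ 2 = 0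
  · have h12 : (j ^ 4 * g2C τ) ^ 3 - 27 * (j ^ 6 * g3C τ) ^ 2 = 0 := by
      linear_combination j ^ 12 * hΔ
    rw [h12, hΔ, div_zero, div_zero]
    ring
  · rw [show (j ^ 4 * g2C τ) ^ 3 - 27 * (j ^ 6 * g3C τ) ^ 2
        = j ^ 12 * (g2C τ ^ 3 - 27 * g3C τ ^ 2) from by ring,
      div_mul_eq_div_div_swap, mul_div_assoc]
    field_simp
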